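/- Let A be an n×n complex matrix with ‖I + A‖ > 1, where ‖·‖ is the operator norm induced by the Euclidean norm. Then the function t ↦ ‖I + tA‖ is strictly increasing on [1, ∞). -/

import Mathlib

open Matrix

/-- The operator norm of a complex `n × n` matrix induced by the Euclidean norm on `ℂⁿ`. -/
noncomputable def euclOpNorm {n : ℕ} (M : Matrix (Fin n) (Fin n) ℂ) : ℝ :=
  ‖Matrix.toEuclideanCLM (𝕜 := ℂ) M‖

private lemma normSmulReal {n : ℕ} (T : EuclideanSpace ℂ (Fin n) →L[ℂ] EuclideanSpace ℂ (Fin n))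
    (c : ℝ) : ‖((c : ℂ)) • T‖ = |c| * ‖T‖ := by
  have := @norm_smul ℂ _ _ _ _ _ (c : ℂ) T
  rwa [Complex.norm_real] at this

/-- If `‖I + A‖ > 1`, then `t ↦ ‖I + tA‖` is strictly increasing on `[1, ∞)`. -/
theorem strictMonoOn_norm_one_add_smul_of_one_lt {n : ℕ} (A : Matrix (Fin n) (Fin n) ℂ)
    (h : 1 < euclOpNorm (1 + A)) :
    StrictMonoOn (fun t : ℝ => euclOpNorm (1 + (t : ℂ) • A)) (Set.Ici 1) := by
  intro s hs t ht hst
  simp only []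
  set T := Matrix.toEuclideanCLM (𝕜 := ℂ) A with hT
  have key : ∀ u : ℝ, euclOpNorm (1 + (u : ℂ) • A)
      = ‖(1 : EuclideanSpace ℂ (Fin n) →L[ℂ] EuclideanSpace ℂ (Fin n)) + (u : ℂ) • T‖ := by
    intro u
    unfold euclOpNorm
    rw [map_add, _root_.map_smul, _root_.map_one]
  have hone : ‖(1 : EuclideanSpace ℂ (Fin n) →L[ℂ] EuclideanSpace ℂ (Fin n))‖ ≤ 1 :=
    ContinuousLinearMap.norm_id_le
  have hs1 : (1 : ℝ) ≤ s := hs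
  have ht0 : (0 : ℝ) < t := lt_of_lt_of_le one_pos (le_of_lt (lt_of_le_of_lt hs1 hst))
  have htne : (t : ℂ) ≠ 0 := by exact_mod_cast ne_of_gt ht0
  -- lower bound : f t > 1
  have hdec1 : (1 : EuclideanSpace ℂ (Fin n) →L[ℂ] EuclideanSpace ℂ (Fin n)) + (1 : ℂ) • T
      = ((1 - 1/t : ℝ) : ℂ) • 1 + ((1/t : ℝ) : ℂ)
        • ((1 : EuclideanSpace ℂ (Fin n) →L[ℂ] EuclideanSpace ℂ (Fin n)) + (t : ℂ) • T) := by
    match_scalars <;> push_cast <;> field_simp <;> ring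
  have hA : euclOpNorm (1 + A) = euclOpNorm (1 + ((1 : ℝ) : ℂ) • A) := by norm_num
  have h1t : (0:ℝ) ≤ 1 - 1/t := by
    rw [sub_nonneg]
    exact div_le_one_of_le₀ (le_trans hs1 (le_of_lt hst)) (le_of_lt ht0)
  have h1t0 : (0:ℝ) < 1/t := by positivity
  have hft : 1 < ‖(1 : EuclideanSpace ℂ (Fin n) →L[ℂ] EuclideanSpace ℂ (Fin n)) + (t : ℂ) • T‖ := by
    have hb : euclOpNorm (1 + ((1:ℝ) : ℂ) • A)
        ≤ (1 - 1/t) * 1 + (1/t)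
          * ‖(1 : EuclideanSpace ℂ (Fin n) →L[ℂ] EuclideanSpace ℂ (Fin n)) + (t : ℂ) • T‖ := by
      rw [key 1]
      push_cast
      rw [hdec1]
      refine le_trans (norm_add_le _ _) ?_
      rw [normSmulReal, normSmulReal, abs_of_nonneg h1t, abs_of_nonneg (le_of_lt h1t0)]
      gcongr
    rw [hA] at h
    nlinarith [h, hb, h1t0]
  -- convexity step
  set l : ℝ := s / t with hl
  have hl0 : 0 < l := div_pos (lt_of_lt_of_le one_pos hs1) ht0
  have hl1 : l < 1 := (div_lt_one ht0).mpr hst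
  have hdec2 : (1 : EuclideanSpace ℂ (Fin n) →L[ℂ] EuclideanSpace ℂ (Fin n)) + (s : ℂ) • T
      = ((1 - l : ℝ) : ℂ) • 1 + ((l : ℝ) : ℂ)
        • ((1 : EuclideanSpace ℂ (Fin n) →L[ℂ] EuclideanSpace ℂ (Fin n)) + (t : ℂ) • T) := by
    rw [hl]
    match_scalars <;> push_cast <;> field_simp <;> ring
  rw [key s, key t]
  calc ‖(1 : EuclideanSpace ℂ (Fin n) →L[ℂ] EuclideanSpace ℂ (Fin n)) + (s : ℂ) • T‖
      ≤ (1 - l) * 1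
        + l * ‖(1 : EuclideanSpace ℂ (Fin n) →L[ℂ] EuclideanSpace ℂ (Fin n)) + (t : ℂ) • T‖ := by
        rw [hdec2]
        refine le_trans (norm_add_le _ _) ?_
        rw [normSmulReal, normSmulReal, abs_of_nonneg (by linarith : (0:ℝ) ≤ 1 - l),
          abs_of_nonneg (le_of_lt hl0)]
        gcongr
    _ < ‖(1 : EuclideanSpace ℂ (Fin n) →L[ℂ] EuclideanSpace ℂ (Fin n)) + (t : ℂ) • T‖ := by
        nlinarith [hft, hl0, hl1]
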